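/- Let n ≥ 1 and let f : Z/nZ → Z/nZ be a quandle endomorphism of the dihedral quandle Z_n^dih. Then f is affine: for every a ∈ Z/nZ, f(a) = (f(1) − f(0))·a + f(0) in Z/nZ. -/
import Mathlib

/-- A quandle endomorphism of the dihedral quandle `Z_n^dih`:
a map `f : ZMod n → ZMod n` with `f (2*y - x) = 2 * f y - f x` for all `x y`. -/
def IsDihedralEnd (n : ℕ) (f : ZMod n → ZMod n) : Prop :=
  ∀ x y : ZMod n, f (2 * y - x) = 2 * f y - f x

theorem dihedral_end_is_affine (n : ℕ) (hn : 1 ≤ n) (f : ZMod n → ZMod n)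
    (hf : IsDihedralEnd n f) :
    ∀ a : ZMod n, f a = (f 1 - f 0) * a + f 0 := by
  have : NeZero n := ⟨by omega⟩
  have aux : ∀ k : ℕ, f (k : ZMod n) = (f 1 - f 0) * k + f 0 := by
    intro k
    induction k using Nat.twoStepInduction with
    | zero => simp
    | one => push_cast; ring
    | more k ih2 ih1 =>
      have h := hf (k : ZMod n) ((k + 1 : ℕ) : ZMod n)
      have e : (2 : ZMod n) * ((k + 1 : ℕ) : ZMod n) - (k : ZMod n)
          = ((k + 2 : ℕ) : ZMod n) := by push_cast; ring
      rw [e] at h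
      rw [h, ih1, ih2]
      push_cast; ring
  intro a
  have := aux a.val
  rwa [ZMod.natCast_val, ZMod.cast_id] at this
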